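/- (Theorem 2 inequality) Let C(x) = log₂(1+x) and γ₁₁, γ₁₂, γ₂₁, γ₂₂ > 0. The strict inequality C(γ₁₁/(γ₂₁+1)) + C(γ₂₂/(γ₁₂+1)) > C(γ₁₁ + γ₂₁) holds if and only if γ₂₁/γ₂₂ < 1/(γ₁₂+1). -/

import Mathlib

open Real

/-- C(x) = log₂(1+x) -/
noncomputable def Cap (x : ℝ) : ℝ := Real.logb 2 (1 + x)

/-- (Theorem 2 inequality) C(γ₁₁/(γ₂₁+1)) + C(γ₂₂/(γ₁₂+1)) > C(γ₁₁+γ₂₁)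
holds if and only if γ₂₁/γ₂₂ < 1/(γ₁₂+1). -/
theorem sum_rate_improvement_iff (γ11 γ12 γ21 γ22 : ℝ)
    (h11 : 0 < γ11) (h12 : 0 < γ12) (h21 : 0 < γ21) (h22 : 0 < γ22) :
    Cap (γ11 / (γ21 + 1)) + Cap (γ22 / (γ12 + 1)) > Cap (γ11 + γ21) ↔
    γ21 / γ22 < 1 / (γ12 + 1) := by
  have h21' : (0:ℝ) < γ21 + 1 := by linarith
  have h12' : (0:ℝ) < γ12 + 1 := by linarith
  have hx : (0:ℝ) < 1 + γ11 / (γ21 + 1) := by positivity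
  have hy : (0:ℝ) < 1 + γ22 / (γ12 + 1) := by positivity
  have hz : (0:ℝ) < 1 + (γ11 + γ21) := by linarith
  unfold Cap
  rw [← Real.logb_mul (ne_of_gt hx) (ne_of_gt hy), gt_iff_lt,
    Real.logb_lt_logb_iff one_lt_two hz (by positivity), div_lt_div_iff₀ h22 h12']
  have key : (1 + γ11 / (γ21 + 1)) * (1 + γ22 / (γ12 + 1)) =
      ((γ21 + 1 + γ11) * (γ12 + 1 + γ22)) / ((γ21 + 1) * (γ12 + 1)) := by
    field_simp
  rw [key, lt_div_iff₀ (by positivity)]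
  constructor <;> intro h <;> nlinarith [mul_pos h11 h12, mul_pos h21 h12,
    mul_pos (mul_pos h11 h21) h12, mul_pos h11 h21]
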